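/- arXiv:2502.11802 — 2 statements merged into one kernel-verified Lean document; each statement's English description precedes it below -/
import Mathlib

section
/- Let q > 2 and M ≥ 0, and let f : ℝ⁴ → ℝ be a measurable function such that for every ρ > 0, ∫_{{ρ < |x| < 2ρ}} |f(x)|^q dx ≤ M^q · ρ^{4−2q}. Then there exists a constant C > 0 depending only on q (and not on f or M) such that for every λ > 0, λ² · L({x ∈ ℝ⁴ : |f(x)| > λ}) ≤ C · M², i.e. f belongs to weak-L² of ℝ⁴ with weak-L² norm at most C^{1/2} M. -/
open MeasureTheory Filter Set ENNReal

noncomputable section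

private lemma exists_dyadic_nat (R t : ℝ) (hR : 0 < R) (ht : R ≤ t) :
    ∃ n : ℕ, R * 2 ^ n ≤ t ∧ t < R * 2 ^ (n + 1) := by
  have htR : 1 ≤ t / R := (one_le_div hR).mpr ht
  have hpos : 0 < t / R := lt_of_lt_of_le one_pos htR
  set u := Real.logb 2 (t / R) with hu
  have hu0 : 0 ≤ u := Real.logb_nonneg one_lt_two htR
  have h2u : (2 : ℝ) ^ u = t / R := Real.rpow_logb (by norm_num) (by norm_num) hpos
  refine ⟨⌊u⌋₊, ?_, ?_⟩
  · have h1 : (2 : ℝ) ^ ((⌊u⌋₊ : ℝ)) ≤ 2 ^ u :=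
      Real.rpow_le_rpow_of_exponent_le one_le_two (Nat.floor_le hu0)
    rw [Real.rpow_natCast, h2u] at h1
    calc R * 2 ^ ⌊u⌋₊ ≤ R * (t / R) := mul_le_mul_of_nonneg_left h1 hR.le
      _ = t := by field_simp
  · have h1 : (2 : ℝ) ^ u < 2 ^ ((⌊u⌋₊ + 1 : ℕ) : ℝ) := by
      apply Real.rpow_lt_rpow_of_exponent_lt one_lt_two
      push_cast
      exact Nat.lt_floor_add_one u
    rw [Real.rpow_natCast, h2u] at h1
    have h2 := mul_lt_mul_of_pos_left h1 hR
    calc t = R * (t / R) := by field_simp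
      _ < R * 2 ^ (⌊u⌋₊ + 1) := h2

theorem dyadic_decay_weak_L2 (q : ℝ) (hq : 2 < q) :
    ∃ C : ℝ, 0 < C ∧
      ∀ M : ℝ, 0 ≤ M →
      ∀ f : EuclideanSpace ℝ (Fin 4) → ℝ, Measurable f →
        (∀ ρ : ℝ, 0 < ρ →
          (∫⁻ x in {x : EuclideanSpace ℝ (Fin 4) | ρ < ‖x‖ ∧ ‖x‖ < 2 * ρ},
              ENNReal.ofReal (|f x| ^ q)) ≤
            ENNReal.ofReal (M ^ q * ρ ^ (4 - 2 * q))) →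
        ∀ l : ℝ, 0 < l →
          ENNReal.ofReal (l ^ 2) *
              volume {x : EuclideanSpace ℝ (Fin 4) | l < |f x|} ≤
            ENNReal.ofReal (C * M ^ 2) := by
  classical
  set B : ℝ≥0∞ := volume (Metric.ball (0 : EuclideanSpace ℝ (Fin 4)) 1) with hBdef
  have hBfin : B ≠ ∞ := measure_ball_lt_top.ne
  set r : ℝ := (2 : ℝ) ^ (4 - 2 * q) with hrdef
  have hr0 : 0 < r := Real.rpow_pos_of_pos two_pos _
  have hr1 : r < 1 := Real.rpow_lt_one_of_one_lt_of_neg one_lt_two (by linarith)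
  set K : ℝ≥0∞ := B + (1 - ENNReal.ofReal r)⁻¹ with hKdef
  have hsub : (0 : ℝ≥0∞) < 1 - ENNReal.ofReal r := by
    rw [tsub_pos_iff_lt]
    exact (ENNReal.ofReal_lt_one).mpr hr1
  have hKfin : K ≠ ∞ :=
    ENNReal.add_ne_top.mpr ⟨hBfin, ENNReal.inv_ne_top.mpr hsub.ne'⟩
  have hKt0 : 0 ≤ K.toReal := ENNReal.toReal_nonneg
  refine ⟨K.toReal + 1, by positivity, ?_⟩
  intro M hM f hf hF l hl
  set bad : Set (EuclideanSpace ℝ (Fin 4)) := {x | l < |f x|} with hbaddef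
  have hbadm : MeasurableSet bad := measurableSet_lt measurable_const hf.abs
  have hmeas : Measurable fun x : EuclideanSpace ℝ (Fin 4) =>
      ENNReal.ofReal (|f x| ^ q) := by
    apply Measurable.ennreal_ofReal
    exact (Real.continuous_rpow_const (by linarith)).measurable.comp hf.abs
  -- Chebyshev on each annulus
  have cheb : ∀ ρ : ℝ, 0 < ρ →
      volume (bad ∩ {x : EuclideanSpace ℝ (Fin 4) | ρ < ‖x‖ ∧ ‖x‖ < 2 * ρ}) ≤
        ENNReal.ofReal (M ^ q * ρ ^ (4 - 2 * q) / l ^ q) := by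
    intro ρ hρ
    set A : Set (EuclideanSpace ℝ (Fin 4)) := {x | ρ < ‖x‖ ∧ ‖x‖ < 2 * ρ} with hAdef
    have hlq : 0 < l ^ q := Real.rpow_pos_of_pos hl q
    have key : ENNReal.ofReal (l ^ q) * volume (bad ∩ A) ≤
        ENNReal.ofReal (M ^ q * ρ ^ (4 - 2 * q)) := by
      calc ENNReal.ofReal (l ^ q) * volume (bad ∩ A)
          = ENNReal.ofReal (l ^ q) * (volume.restrict A) bad := by
            rw [Measure.restrict_apply hbadm]
        _ ≤ ENNReal.ofReal (l ^ q) *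
              (volume.restrict A) {x | ENNReal.ofReal (l ^ q) ≤ ENNReal.ofReal (|f x| ^ q)} := by
            gcongr
            intro x hx
            have h1 : l ≤ |f x| := le_of_lt hx
            have h2 : l ^ q ≤ |f x| ^ q := Real.rpow_le_rpow hl.le h1 (by linarith)
            exact ENNReal.ofReal_le_ofReal h2
        _ ≤ ∫⁻ x in A, ENNReal.ofReal (|f x| ^ q) :=
            mul_meas_ge_le_lintegral₀ hmeas.aemeasurable _
        _ ≤ ENNReal.ofReal (M ^ q * ρ ^ (4 - 2 * q)) := hF ρ hρ
    rw [ENNReal.ofReal_div_of_pos hlq]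
    rw [ENNReal.le_div_iff_mul_le (Or.inl (ENNReal.ofReal_pos.mpr hlq).ne')
      (Or.inl ENNReal.ofReal_ne_top)]
    rw [mul_comm]
    exact key
  -- main estimate for each R > 0
  have main : ∀ R : ℝ, 0 < R →
      volume bad ≤ ENNReal.ofReal (R ^ 4) * B +
        ENNReal.ofReal (M ^ q * R ^ (4 - 2 * q) / l ^ q) * (1 - ENNReal.ofReal r)⁻¹ := by
    intro R hR
    set S : ℕ → Set (EuclideanSpace ℝ (Fin 4)) :=
      fun n => {x | R * 2 ^ n ≤ ‖x‖ ∧ ‖x‖ < R * 2 ^ (n + 1)} with hSdef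
    have cover : bad ⊆ Metric.ball (0 : EuclideanSpace ℝ (Fin 4)) R ∪ ⋃ n : ℕ, S n := by
      intro x _
      rcases lt_or_ge ‖x‖ R with h | h
      · left; exact mem_ball_zero_iff.mpr h
      · right
        obtain ⟨n, h1, h2⟩ := exists_dyadic_nat R ‖x‖ hR h
        exact mem_iUnion.mpr ⟨n, h1, h2⟩
    have hSn : ∀ n : ℕ, volume (bad ∩ S n) ≤
        ENNReal.ofReal (M ^ q * R ^ (4 - 2 * q) / l ^ q * r ^ n) := by
      intro n
      set ρ : ℝ := R * 2 ^ n with hρdef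
      have hρ : 0 < ρ := by positivity
      have hsub2 : bad ∩ S n ⊆ Metric.sphere (0 : EuclideanSpace ℝ (Fin 4)) ρ ∪
          (bad ∩ {x : EuclideanSpace ℝ (Fin 4) | ρ < ‖x‖ ∧ ‖x‖ < 2 * ρ}) := by
        intro x hx
        rcases eq_or_lt_of_le hx.2.1 with heq | hlt
        · left; simpa [dist_zero_right] using heq.symm
        · right
          refine ⟨hx.1, hlt, ?_⟩
          have h3 : R * 2 ^ (n + 1) = 2 * ρ := by rw [hρdef]; ring
          rw [← h3]; exact hx.2.2
      have heq2 : M ^ q * ρ ^ (4 - 2 * q) / l ^ q =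
          M ^ q * R ^ (4 - 2 * q) / l ^ q * r ^ n := by
        have h2n : ((2 : ℝ) ^ n) ^ (4 - 2 * q) = r ^ n := by
          rw [← Real.rpow_natCast (2 : ℝ) n, ← Real.rpow_natCast r n, hrdef,
            ← Real.rpow_mul (by norm_num : (0:ℝ) ≤ 2),
            ← Real.rpow_mul (by norm_num : (0:ℝ) ≤ 2), mul_comm]
        rw [hρdef, Real.mul_rpow hR.le (by positivity), h2n]
        ring
      calc volume (bad ∩ S n)
          ≤ volume (Metric.sphere (0 : EuclideanSpace ℝ (Fin 4)) ρ ∪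
              (bad ∩ {x : EuclideanSpace ℝ (Fin 4) | ρ < ‖x‖ ∧ ‖x‖ < 2 * ρ})) :=
            measure_mono hsub2
        _ ≤ volume (Metric.sphere (0 : EuclideanSpace ℝ (Fin 4)) ρ) +
              volume (bad ∩ {x : EuclideanSpace ℝ (Fin 4) | ρ < ‖x‖ ∧ ‖x‖ < 2 * ρ}) :=
            measure_union_le _ _
        _ = volume (bad ∩ {x : EuclideanSpace ℝ (Fin 4) | ρ < ‖x‖ ∧ ‖x‖ < 2 * ρ}) := by
              rw [Measure.addHaar_sphere volume 0 ρ, zero_add]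
        _ ≤ ENNReal.ofReal (M ^ q * ρ ^ (4 - 2 * q) / l ^ q) := cheb ρ hρ
        _ = _ := by rw [heq2]
    have hsum : ∑' n : ℕ, ENNReal.ofReal (M ^ q * R ^ (4 - 2 * q) / l ^ q * r ^ n) =
        ENNReal.ofReal (M ^ q * R ^ (4 - 2 * q) / l ^ q) * (1 - ENNReal.ofReal r)⁻¹ := by
      have hK0 : 0 ≤ M ^ q * R ^ (4 - 2 * q) / l ^ q := by positivity
      calc ∑' n : ℕ, ENNReal.ofReal (M ^ q * R ^ (4 - 2 * q) / l ^ q * r ^ n)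
          = ∑' n : ℕ, ENNReal.ofReal (M ^ q * R ^ (4 - 2 * q) / l ^ q) *
              (ENNReal.ofReal r) ^ n := by
            refine tsum_congr fun n => ?_
            rw [ENNReal.ofReal_mul hK0, ENNReal.ofReal_pow hr0.le]
        _ = ENNReal.ofReal (M ^ q * R ^ (4 - 2 * q) / l ^ q) *
              ∑' n : ℕ, (ENNReal.ofReal r) ^ n := ENNReal.tsum_mul_left
        _ = _ := by rw [ENNReal.tsum_geometric]
    calc volume bad
        = volume (bad ∩ (Metric.ball (0 : EuclideanSpace ℝ (Fin 4)) R ∪ ⋃ n : ℕ, S n)) := by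
          rw [inter_eq_left.mpr cover]
      _ ≤ volume (bad ∩ Metric.ball (0 : EuclideanSpace ℝ (Fin 4)) R) +
            volume (bad ∩ ⋃ n : ℕ, S n) := by
          rw [inter_union_distrib_left]
          exact measure_union_le _ _
      _ ≤ volume (Metric.ball (0 : EuclideanSpace ℝ (Fin 4)) R) +
            ∑' n : ℕ, volume (bad ∩ S n) := by
          apply add_le_add (measure_mono inter_subset_right)
          rw [inter_iUnion]
          exact measure_iUnion_le _
      _ ≤ ENNReal.ofReal (R ^ 4) * B +
            ∑' n : ℕ, ENNReal.ofReal (M ^ q * R ^ (4 - 2 * q) / l ^ q * r ^ n) := by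
          apply add_le_add
          · rw [Measure.addHaar_ball volume (0 : EuclideanSpace ℝ (Fin 4)) hR.le]
            simp [finrank_euclideanSpace_fin]
            exact le_rfl
          · exact ENNReal.tsum_le_tsum hSn
      _ = _ := by rw [hsum]
  by_cases hM0 : M = 0
  · -- zero case: volume bad = 0
    subst hM0
    have hq0 : q ≠ 0 := by linarith
    have hvz : ∀ R : ℝ, 0 < R → volume bad ≤ ENNReal.ofReal (R ^ 4) * B := by
      intro R hR
      have h := main R hR
      rwa [Real.zero_rpow hq0, zero_mul, zero_div, ENNReal.ofReal_zero, zero_mul,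
        add_zero] at h
    have hvol : volume bad = 0 := by
      refine le_antisymm (ENNReal.le_of_forall_pos_le_add fun ε hε _ => ?_) zero_le
      rw [zero_add]
      set Bt : ℝ := B.toReal with hBt
      have hBt0 : 0 ≤ Bt := ENNReal.toReal_nonneg
      set R : ℝ := min 1 ((ε : ℝ) / (Bt + 1)) with hRdef
      have hR : 0 < R := lt_min one_pos (by positivity)
      have hR1 : R ≤ 1 := min_le_left _ _
      have hR2 : R ≤ (ε : ℝ) / (Bt + 1) := min_le_right _ _
      have hRB : R * Bt ≤ (ε : ℝ) := by
        have h1 : R * Bt ≤ (ε : ℝ) / (Bt + 1) * Bt :=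
          mul_le_mul_of_nonneg_right hR2 hBt0
        have h2 : (ε : ℝ) / (Bt + 1) * Bt ≤ (ε : ℝ) := by
          rw [div_mul_eq_mul_div, div_le_iff₀ (by positivity)]
          nlinarith [ε.coe_nonneg]
        linarith
      calc volume bad ≤ ENNReal.ofReal (R ^ 4) * B := hvz R hR
        _ ≤ ENNReal.ofReal R * B :=
            mul_le_mul_left
              (ENNReal.ofReal_le_ofReal (pow_le_of_le_one hR.le hR1 (by norm_num))) B
        _ = ENNReal.ofReal R * ENNReal.ofReal Bt := by rw [ENNReal.ofReal_toReal hBfin]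
        _ = ENNReal.ofReal (R * Bt) := (ENNReal.ofReal_mul hR.le).symm
        _ ≤ ENNReal.ofReal (ε : ℝ) := ENNReal.ofReal_le_ofReal hRB
        _ = (ε : ℝ≥0∞) := ENNReal.ofReal_coe_nnreal
    rw [hvol, mul_zero]
    exact zero_le
  · have hMpos : 0 < M := lt_of_le_of_ne hM (Ne.symm hM0)
    set R : ℝ := Real.sqrt (M / l) with hRdef
    have hMl : 0 < M / l := div_pos hMpos hl
    have hR : 0 < R := Real.sqrt_pos.mpr hMl
    have hR4 : R ^ 4 = (M / l) ^ 2 := by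
      have h : R ^ 4 = (R ^ 2) ^ 2 := by ring
      rw [h, Real.sq_sqrt hMl.le]
    have hRrpow : R ^ (4 - 2 * q) = (M / l) ^ (2 - q) := by
      rw [hRdef, Real.sqrt_eq_rpow, ← Real.rpow_mul hMl.le]
      congr 1
      ring
    have hM2 : M ^ q * M ^ (2 - q) = M ^ 2 := by
      rw [← Real.rpow_add hMpos]
      rw [show q + (2 - q) = ((2 : ℕ) : ℝ) by push_cast; ring, Real.rpow_natCast]
    have hl2 : l ^ q * l ^ (2 - q) = l ^ 2 := by
      rw [← Real.rpow_add hl]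
      rw [show q + (2 - q) = ((2 : ℕ) : ℝ) by push_cast; ring, Real.rpow_natCast]
    have hKval : M ^ q * R ^ (4 - 2 * q) / l ^ q = M ^ 2 / l ^ 2 := by
      have e : M ^ q * (M ^ (2 - q) / l ^ (2 - q)) / l ^ q
          = (M ^ q * M ^ (2 - q)) / (l ^ q * l ^ (2 - q)) := by ring
      rw [hRrpow, Real.div_rpow hM hl.le, e, hM2, hl2]
    have hmain := main R hR
    rw [hR4, hKval, div_pow] at hmain
    have hmain2 : volume bad ≤ ENNReal.ofReal (M ^ 2 / l ^ 2) * K := by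
      rw [hKdef, mul_add]
      exact hmain
    calc ENNReal.ofReal (l ^ 2) * volume bad
        ≤ ENNReal.ofReal (l ^ 2) * (ENNReal.ofReal (M ^ 2 / l ^ 2) * K) := by gcongr
      _ = ENNReal.ofReal (l ^ 2 * (M ^ 2 / l ^ 2)) * K := by
          rw [← mul_assoc, ← ENNReal.ofReal_mul (by positivity)]
      _ = ENNReal.ofReal (M ^ 2) * K := by
          rw [show l ^ 2 * (M ^ 2 / l ^ 2) = M ^ 2 by field_simp]
      _ ≤ ENNReal.ofReal (M ^ 2) * ENNReal.ofReal (K.toReal + 1) := by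
          gcongr
          calc K = ENNReal.ofReal K.toReal := (ENNReal.ofReal_toReal hKfin).symm
            _ ≤ ENNReal.ofReal (K.toReal + 1) := ENNReal.ofReal_le_ofReal (by linarith)
      _ = ENNReal.ofReal ((K.toReal + 1) * M ^ 2) := by
          rw [← ENNReal.ofReal_mul (by positivity), mul_comm]
end
end

section
/- For R ∈ (0,1) define τ_R : [0,∞) → ℝ by τ_R(t) = 0 for 0 ≤ t ≤ R², τ_R(t) = log(log(e t / R²)) / log(log(e/R)) for R² ≤ t ≤ R, and τ_R(t) = 1 for t ≥ R. Then τ_R is continuous and nondecreasing with 0 ≤ τ_R ≤ 1, and the following limits hold as R → 0⁺: (i) ∫_{R²}^{R} ( |τ_R''(t)|² + |τ_R'(t)/t|² ) t³ dt → 0; and (ii) ∫₀^∞ λ · ( L({x ∈ ℝ⁴ : R² < |x| < R and τ_R'(|x|) > λ}) )^{1/2} dλ → 0. (Here (i) says the second derivatives of x ↦ τ_R(|x|) tend to 0 in L²(B₁ ⊂ ℝ⁴), and the quantity in (ii) is comparable to the square of the Lorentz L^{4,2}(B₁) norm of the gradient of x ↦ τ_R(|x|).) -/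
open MeasureTheory Filter Set ENNReal

noncomputable section

/-- The logarithmic cutoff function `τ_R`: it vanishes on `[0, R²]`, equals `1` on
`[R, ∞)`, and equals `log(log(e t / R²)) / log(log(e/R))` on `[R², R]`. -/
def tauR (R t : ℝ) : ℝ :=
  if t ≤ R ^ 2 then 0
  else if t ≤ R then
    Real.log (Real.log (Real.exp 1 * t / R ^ 2)) /
      Real.log (Real.log (Real.exp 1 / R))
  else 1

namespace Cutoff

def cc (R : ℝ) : ℝ := Real.log (Real.log (Real.exp 1 / R))
def LL (R t : ℝ) : ℝ := Real.log (Real.exp 1 * t / R ^ 2)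
def gg (R t : ℝ) : ℝ := Real.log (LL R t) / cc R

variable {R : ℝ}

lemma R2_pos (hR : R ∈ Set.Ioo (0:ℝ) 1) : 0 < R ^ 2 := pow_pos hR.1 2

lemma R2_lt_R (hR : R ∈ Set.Ioo (0:ℝ) 1) : R ^ 2 < R := by
  nlinarith [hR.1, hR.2]

lemma one_lt_logeR (hR : R ∈ Set.Ioo (0:ℝ) 1) : 1 < Real.log (Real.exp 1 / R) := by
  have h1 : Real.exp 1 < Real.exp 1 / R := by
    rw [lt_div_iff₀ hR.1]; nlinarith [Real.exp_pos 1, hR.1, hR.2]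
  calc 1 = Real.log (Real.exp 1) := (Real.log_exp 1).symm
  _ < _ := Real.log_lt_log (Real.exp_pos 1) h1

lemma cc_pos (hR : R ∈ Set.Ioo (0:ℝ) 1) : 0 < cc R :=
  Real.log_pos (one_lt_logeR hR)

lemma arg_ge (hR : R ∈ Set.Ioo (0:ℝ) 1) {t : ℝ} (ht : R ^ 2 ≤ t) :
    Real.exp 1 ≤ Real.exp 1 * t / R ^ 2 := by
  rw [le_div_iff₀ (R2_pos hR)]
  nlinarith [Real.exp_pos 1, R2_pos hR]

lemma LL_ge_one (hR : R ∈ Set.Ioo (0:ℝ) 1) {t : ℝ} (ht : R ^ 2 ≤ t) : 1 ≤ LL R t := by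
  have := Real.log_le_log (Real.exp_pos 1) (arg_ge hR ht)
  rwa [Real.log_exp] at this

lemma LL_atR2 (hR : R ∈ Set.Ioo (0:ℝ) 1) : LL R (R ^ 2) = 1 := by
  unfold LL
  rw [mul_div_assoc, div_self (ne_of_gt (R2_pos hR)), mul_one, Real.log_exp]

lemma gg_atR2 (hR : R ∈ Set.Ioo (0:ℝ) 1) : gg R (R ^ 2) = 0 := by
  unfold gg; rw [LL_atR2 hR, Real.log_one, zero_div]

lemma LL_atR (hR : R ∈ Set.Ioo (0:ℝ) 1) : LL R R = Real.log (Real.exp 1 / R) := by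
  unfold LL
  congr 1
  field_simp [ne_of_gt hR.1]

lemma gg_atR (hR : R ∈ Set.Ioo (0:ℝ) 1) : gg R R = 1 := by
  have := cc_pos hR
  unfold gg cc at *; rw [LL_atR hR]
  exact div_self (ne_of_gt this)

lemma gg_mono (hR : R ∈ Set.Ioo (0:ℝ) 1) : MonotoneOn (gg R) (Set.Ici (R ^ 2)) := by
  intro a ha b hb hab
  unfold gg
  have h1 : (1:ℝ) ≤ LL R a := LL_ge_one hR ha
  have h2 : LL R a ≤ LL R b := by
    unfold LL
    apply Real.log_le_log
    · have := arg_ge hR ha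
      nlinarith [Real.exp_pos 1]
    · gcongr
  have h3 := Real.log_le_log (by linarith : (0:ℝ) < LL R a) h2
  have h4 := cc_pos hR
  exact (div_le_div_iff_of_pos_right h4).mpr h3

lemma tauR_eq_clamp (hR : R ∈ Set.Ioo (0:ℝ) 1) (t : ℝ) :
    tauR R t = gg R (min (max t (R ^ 2)) R) := by
  unfold tauR
  rcases le_or_gt t (R ^ 2) with h1 | h1
  · rw [if_pos h1, max_eq_right h1, min_eq_left (R2_lt_R hR).le, gg_atR2 hR]
  · rw [if_neg (not_le.2 h1), max_eq_left h1.le]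
    rcases le_or_gt t R with h2 | h2
    · rw [if_pos h2, min_eq_left h2]; rfl
    · rw [if_neg (not_le.2 h2), min_eq_right h2.le, gg_atR hR]

end Cutoff

namespace Cutoff
variable {R : ℝ}

lemma gg_contOn (hR : R ∈ Set.Ioo (0:ℝ) 1) : ContinuousOn (gg R) (Set.Ici (R ^ 2)) := by
  intro s hs
  have h1 : (1:ℝ) ≤ LL R s := LL_ge_one hR hs
  have harg : (0:ℝ) < Real.exp 1 * s / R ^ 2 := by
    have := arg_ge hR hs; nlinarith [Real.exp_pos 1]
  apply ContinuousAt.continuousWithinAt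
  have hinner : ContinuousAt (fun s => Real.exp 1 * s / R ^ 2) s := by fun_prop
  have h2 : ContinuousAt (LL R) s := by
    unfold LL; exact hinner.log (ne_of_gt harg)
  have h3 : ContinuousAt (fun s => Real.log (LL R s)) s := h2.log (by linarith)
  exact h3.div_const _

lemma clamp_mem (hR : R ∈ Set.Ioo (0:ℝ) 1) (t : ℝ) :
    min (max t (R ^ 2)) R ∈ Set.Ici (R ^ 2) :=
  le_min (le_max_right _ _) (R2_lt_R hR).le

lemma tauR_monotone (hR : R ∈ Set.Ioo (0:ℝ) 1) : Monotone (tauR R) := by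
  intro a b hab
  rw [tauR_eq_clamp hR, tauR_eq_clamp hR]
  exact gg_mono hR (clamp_mem hR a) (clamp_mem hR b)
    (min_le_min (max_le_max hab le_rfl) le_rfl)

lemma tauR_cont (hR : R ∈ Set.Ioo (0:ℝ) 1) : Continuous (tauR R) := by
  have : tauR R = fun t => gg R (min (max t (R ^ 2)) R) := funext (tauR_eq_clamp hR)
  rw [this]
  exact (gg_contOn hR).comp_continuous
    ((continuous_id.max continuous_const).min continuous_const) (clamp_mem hR)

lemma tauR_nonneg (hR : R ∈ Set.Ioo (0:ℝ) 1) {t : ℝ} (ht : 0 ≤ t) : 0 ≤ tauR R t := by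
  have h0 : tauR R 0 = 0 := by unfold tauR; rw [if_pos (R2_pos hR).le]
  rw [← h0]; exact tauR_monotone hR ht

lemma tauR_le_one (hR : R ∈ Set.Ioo (0:ℝ) 1) (t : ℝ) : tauR R t ≤ 1 := by
  rw [tauR_eq_clamp hR, ← gg_atR hR]
  exact gg_mono hR (clamp_mem hR t) (le_of_lt (R2_lt_R hR)) (min_le_right _ _)

lemma part1 : ∀ R ∈ Set.Ioo (0 : ℝ) 1,
    ContinuousOn (tauR R) (Set.Ici 0) ∧ MonotoneOn (tauR R) (Set.Ici 0) ∧
      ∀ t ∈ Set.Ici (0 : ℝ), 0 ≤ tauR R t ∧ tauR R t ≤ 1 := fun R hR =>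
  ⟨(tauR_cont hR).continuousOn, (tauR_monotone hR).monotoneOn _,
    fun t ht => ⟨tauR_nonneg hR ht, tauR_le_one hR t⟩⟩

end Cutoff

namespace Cutoff
variable {R : ℝ}

lemma hasDerivAt_LL (hR : R ∈ Set.Ioo (0:ℝ) 1) {t : ℝ} (ht : 0 < t) :
    HasDerivAt (LL R) t⁻¹ t := by
  have h0 : Real.exp 1 * t / R ^ 2 ≠ 0 := by
    have := Real.exp_pos 1; have := R2_pos hR; positivity
  have hinner : HasDerivAt (fun s => Real.exp 1 * s / R ^ 2) (Real.exp 1 * 1 / R ^ 2) t :=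
    ((hasDerivAt_id t).const_mul _).div_const _
  have h2 := hinner.log h0
  convert h2 using 1
  · rfl
  field_simp [(Real.exp_pos 1).ne', (R2_pos hR).ne', ne_of_gt ht, hR.1.ne']

lemma hasDerivAt_gg (hR : R ∈ Set.Ioo (0:ℝ) 1) {t : ℝ} (ht : R ^ 2 < t) :
    HasDerivAt (gg R) ((cc R * (t * LL R t))⁻¹) t := by
  have ht0 : 0 < t := lt_trans (R2_pos hR) ht
  have hL : (1:ℝ) ≤ LL R t := LL_ge_one hR ht.le
  have h2 := ((hasDerivAt_LL hR ht0).log (by linarith)).div_const (cc R)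
  convert h2 using 1
  · rfl
  · rfl
  · rfl
  have := cc_pos hR
  field_simp

lemma hasDerivAt_inner (hR : R ∈ Set.Ioo (0:ℝ) 1) {t : ℝ} (ht : 0 < t) :
    HasDerivAt (fun s => cc R * (s * LL R s)) (cc R * (LL R t + 1)) t := by
  have h2 := ((hasDerivAt_id t).mul (hasDerivAt_LL hR ht)).const_mul (cc R)
  convert h2 using 1
  · rfl
  · rfl
  · rfl
  field_simp [ne_of_gt ht]
  simp only [id]
  ring

lemma hasDerivAt_phi (hR : R ∈ Set.Ioo (0:ℝ) 1) {t : ℝ} (ht : R ^ 2 < t) :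
    HasDerivAt (fun s => (cc R * (s * LL R s))⁻¹)
      (-(cc R * (LL R t + 1)) / (cc R * (t * LL R t)) ^ 2) t := by
  have ht0 : 0 < t := lt_trans (R2_pos hR) ht
  have hL : (1:ℝ) ≤ LL R t := LL_ge_one hR ht.le
  have hne : cc R * (t * LL R t) ≠ 0 := by
    have := cc_pos hR; positivity
  exact (hasDerivAt_inner hR ht0).inv hne

lemma tauR_eq_gg_on (hR : R ∈ Set.Ioo (0:ℝ) 1) :
    ∀ s ∈ Set.Ioo (R ^ 2) R, tauR R s = gg R s := by
  intro s hs
  unfold tauR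
  rw [if_neg (not_le.2 hs.1), if_pos hs.2.le]; rfl

lemma deriv_tauR (hR : R ∈ Set.Ioo (0:ℝ) 1) {t : ℝ} (ht : t ∈ Set.Ioo (R ^ 2) R) :
    deriv (tauR R) t = (cc R * (t * LL R t))⁻¹ := by
  have hev : tauR R =ᶠ[nhds t] gg R :=
    eventually_of_mem (isOpen_Ioo.mem_nhds ht) (tauR_eq_gg_on hR)
  rw [hev.deriv_eq]
  exact (hasDerivAt_gg hR ht.1).deriv

lemma deriv2_tauR (hR : R ∈ Set.Ioo (0:ℝ) 1) {t : ℝ} (ht : t ∈ Set.Ioo (R ^ 2) R) :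
    deriv (deriv (tauR R)) t = -(cc R * (LL R t + 1)) / (cc R * (t * LL R t)) ^ 2 := by
  have hev : deriv (tauR R) =ᶠ[nhds t] (fun s => (cc R * (s * LL R s))⁻¹) :=
    eventually_of_mem (isOpen_Ioo.mem_nhds ht) (fun s hs => deriv_tauR hR hs)
  rw [hev.deriv_eq]
  exact (hasDerivAt_phi hR ht.1).deriv

lemma hasDerivAt_F (hR : R ∈ Set.Ioo (0:ℝ) 1) {t : ℝ} (ht : R ^ 2 ≤ t) :
    HasDerivAt (fun s => -(LL R s)⁻¹) (t⁻¹ / (LL R t) ^ 2) t := by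
  have ht0 : 0 < t := lt_of_lt_of_le (R2_pos hR) ht
  have hL : (1:ℝ) ≤ LL R t := LL_ge_one hR ht
  have h2 := ((hasDerivAt_LL hR ht0).inv (by linarith)).neg
  convert h2 using 1
  · rfl
  · rfl
  · rfl
  ring

end Cutoff

namespace Cutoff
variable {R : ℝ}

lemma pointwise_bound (hR : R ∈ Set.Ioo (0:ℝ) 1) {t : ℝ} (ht : t ∈ Set.Ioo (R ^ 2) R) :
    (|deriv (deriv (tauR R)) t| ^ 2 + |deriv (tauR R) t / t| ^ 2) * t ^ 3
      ≤ 5 / cc R ^ 2 * (t⁻¹ / (LL R t) ^ 2) := by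
  have ht0 : 0 < t := lt_trans (R2_pos hR) ht.1
  have hL : (1:ℝ) ≤ LL R t := LL_ge_one hR ht.1.le
  have hc := cc_pos hR
  rw [deriv_tauR hR ht, deriv2_tauR hR ht, sq_abs, sq_abs]
  have hl0 : LL R t ≠ 0 := by linarith
  have e1 : (-(cc R * (LL R t + 1)) / (cc R * (t * LL R t)) ^ 2) ^ 2
      = (LL R t + 1) ^ 2 / (cc R ^ 2 * t ^ 4 * LL R t ^ 4) := by
    field_simp
  have e2 : ((cc R * (t * LL R t))⁻¹ / t) ^ 2 = 1 / (cc R ^ 2 * t ^ 4 * LL R t ^ 2) := by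
    field_simp
  rw [e1, e2, ← sub_nonneg]
  have expand : 5 / cc R ^ 2 * (t⁻¹ / LL R t ^ 2) -
      ((LL R t + 1) ^ 2 / (cc R ^ 2 * t ^ 4 * LL R t ^ 4) +
        1 / (cc R ^ 2 * t ^ 4 * LL R t ^ 2)) * t ^ 3
      = (4 * LL R t ^ 2 - (LL R t + 1) ^ 2) / (cc R ^ 2 * t * LL R t ^ 4) := by
    field_simp
    ring
  rw [expand]
  apply div_nonneg (by nlinarith) (by positivity)

lemma integrand_nonneg {t : ℝ} (ht : 0 ≤ t) :
    0 ≤ (|deriv (deriv (tauR R)) t| ^ 2 + |deriv (tauR R) t / t| ^ 2) * t ^ 3 :=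
  mul_nonneg (add_nonneg (sq_nonneg _) (sq_nonneg _)) (pow_nonneg ht 3)

lemma integrand_measurable :
    Measurable (fun t => (|deriv (deriv (tauR R)) t| ^ 2 + |deriv (tauR R) t / t| ^ 2) * t ^ 3) := by
  apply Measurable.mul ?_ (measurable_id.pow_const 3)
  exact ((measurable_deriv _).abs.pow_const 2).add
    (((measurable_deriv _).div measurable_id).abs.pow_const 2)

lemma LL_contAt (hR : R ∈ Set.Ioo (0:ℝ) 1) {s : ℝ} (hs : R ^ 2 ≤ s) :
    ContinuousAt (LL R) s := by
  have harg : (0:ℝ) < Real.exp 1 * s / R ^ 2 := by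
    have := arg_ge hR hs; nlinarith [Real.exp_pos 1]
  have hinner : ContinuousAt (fun s => Real.exp 1 * s / R ^ 2) s := by fun_prop
  unfold LL; exact hinner.log (ne_of_gt harg)

lemma F'_contOn (hR : R ∈ Set.Ioo (0:ℝ) 1) :
    ContinuousOn (fun t => t⁻¹ / (LL R t) ^ 2) (Set.Icc (R ^ 2) R) := by
  intro s hs
  have hs0 : 0 < s := lt_of_lt_of_le (R2_pos hR) hs.1
  have hL : (1:ℝ) ≤ LL R s := LL_ge_one hR hs.1
  apply ContinuousAt.continuousWithinAt
  exact (continuousAt_inv₀ (ne_of_gt hs0)).div ((LL_contAt hR hs.1).pow 2) (by positivity)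

lemma partI_le (hR : R ∈ Set.Ioo (0:ℝ) 1) :
    ∫ t in Set.Ioo (R ^ 2) R,
      (|deriv (deriv (tauR R)) t| ^ 2 + |deriv (tauR R) t / t| ^ 2) * t ^ 3
        ≤ 5 / cc R ^ 2 := by
  have hc := cc_pos hR
  have hR2R := (R2_lt_R hR).le
  have hψc : ContinuousOn (fun t => 5 / cc R ^ 2 * (t⁻¹ / (LL R t) ^ 2))
      (Set.Icc (R ^ 2) R) := continuousOn_const.mul (F'_contOn hR)
  have hψint : IntegrableOn (fun t => 5 / cc R ^ 2 * (t⁻¹ / (LL R t) ^ 2))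
      (Set.Ioo (R ^ 2) R) volume :=
    (hψc.integrableOn_Icc).mono_set Set.Ioo_subset_Icc_self
  have hint : IntegrableOn
      (fun t => (|deriv (deriv (tauR R)) t| ^ 2 + |deriv (tauR R) t / t| ^ 2) * t ^ 3)
      (Set.Ioo (R ^ 2) R) volume := by
    apply Measure.integrableOn_of_bounded (μ := volume) (s := Set.Ioo (R^2) R)
      (M := 5 / cc R ^ 2 * (R ^ 2)⁻¹) (measure_Ioo_lt_top).ne
      integrand_measurable.aestronglyMeasurable
    · rw [ae_restrict_iff' measurableSet_Ioo]
      apply ae_of_all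
      intro t ht
      have ht0 : 0 < t := lt_trans (R2_pos hR) ht.1
      have hL : (1:ℝ) ≤ LL R t := LL_ge_one hR ht.1.le
      rw [Real.norm_eq_abs, abs_of_nonneg (integrand_nonneg ht0.le)]
      calc _ ≤ 5 / cc R ^ 2 * (t⁻¹ / (LL R t) ^ 2) := pointwise_bound hR ht
      _ ≤ 5 / cc R ^ 2 * (R ^ 2)⁻¹ := by
        apply mul_le_mul_of_nonneg_left ?_ (by positivity)
        calc t⁻¹ / LL R t ^ 2 ≤ t⁻¹ / 1 := by
              apply div_le_div_of_nonneg_left (by positivity) one_pos (by nlinarith)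
        _ = t⁻¹ := div_one _
        _ ≤ (R ^ 2)⁻¹ := by
              apply inv_anti₀ (R2_pos hR) ht.1.le
  have hFTC : ∫ t in (R ^ 2)..R, (t⁻¹ / (LL R t) ^ 2)
      = (-(LL R R)⁻¹) - (-(LL R (R ^ 2))⁻¹) := by
    apply intervalIntegral.integral_eq_sub_of_hasDerivAt (f := fun s => -(LL R s)⁻¹)
    · intro t ht
      rw [Set.uIcc_of_le hR2R] at ht
      exact hasDerivAt_F hR ht.1
    · apply ContinuousOn.intervalIntegrable
      rw [Set.uIcc_of_le hR2R]
      exact F'_contOn hR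
  have hval : ∫ t in Set.Ioo (R ^ 2) R, (t⁻¹ / (LL R t) ^ 2) ≤ 1 := by
    rw [← integral_Ioc_eq_integral_Ioo, ← intervalIntegral.integral_of_le hR2R, hFTC,
      LL_atR2 hR]
    have hLR : (1:ℝ) ≤ LL R R := LL_ge_one hR hR2R
    have : 0 ≤ (LL R R)⁻¹ := by positivity
    norm_num
    linarith
  calc ∫ t in Set.Ioo (R ^ 2) R,
      (|deriv (deriv (tauR R)) t| ^ 2 + |deriv (tauR R) t / t| ^ 2) * t ^ 3
      ≤ ∫ t in Set.Ioo (R ^ 2) R, 5 / cc R ^ 2 * (t⁻¹ / (LL R t) ^ 2) :=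
        setIntegral_mono_on hint hψint measurableSet_Ioo (fun t ht => pointwise_bound hR ht)
  _ = 5 / cc R ^ 2 * ∫ t in Set.Ioo (R ^ 2) R, (t⁻¹ / (LL R t) ^ 2) := by
        rw [integral_const_mul]
  _ ≤ 5 / cc R ^ 2 * 1 := mul_le_mul_of_nonneg_left hval (by positivity)
  _ = 5 / cc R ^ 2 := mul_one _

lemma partI_nonneg :
    0 ≤ ∫ t in Set.Ioo (R ^ 2) R,
      (|deriv (deriv (tauR R)) t| ^ 2 + |deriv (tauR R) t / t| ^ 2) * t ^ 3 := by
  apply setIntegral_nonneg measurableSet_Ioo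
  intro t ht
  exact integrand_nonneg (le_trans (sq_nonneg R) ht.1.le)

lemma cc_tendsto : Tendsto cc (nhdsWithin (0:ℝ) (Set.Ioi 0)) atTop := by
  unfold cc
  have h1 : Tendsto (fun R : ℝ => Real.exp 1 / R) (nhdsWithin (0:ℝ) (Set.Ioi 0)) atTop := by
    simp only [div_eq_mul_inv]
    exact Tendsto.const_mul_atTop (Real.exp_pos 1) tendsto_inv_nhdsGT_zero
  exact Real.tendsto_log_atTop.comp (Real.tendsto_log_atTop.comp h1)

lemma five_div_cc_sq : Tendsto (fun R => 5 / cc R ^ 2)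
    (nhdsWithin (0:ℝ) (Set.Ioi 0)) (nhds 0) :=
  Tendsto.div_atTop tendsto_const_nhds ((tendsto_pow_atTop two_ne_zero).comp cc_tendsto)

lemma partI : Filter.Tendsto (fun R : ℝ =>
      ∫ t in Set.Ioo (R ^ 2) R,
        (|deriv (deriv (tauR R)) t| ^ 2 + |deriv (tauR R) t / t| ^ 2) * t ^ 3)
    (nhdsWithin 0 (Set.Ioi 0)) (nhds 0) := by
  apply tendsto_of_tendsto_of_tendsto_of_le_of_le' tendsto_const_nhds five_div_cc_sq
  · filter_upwards [self_mem_nhdsWithin] with R _ using partI_nonneg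
  · filter_upwards [Ioo_mem_nhdsGT_of_mem ⟨le_refl (0:ℝ), zero_lt_one⟩] with R hR using
      partI_le hR

end Cutoff

namespace Cutoff
variable {R : ℝ}

abbrev EE := EuclideanSpace ℝ (Fin 4)

def KK : ℝ≥0∞ := volume (Metric.closedBall (0:EE) 1)

lemma KK_ne_top : KK ≠ ⊤ := measure_closedBall_lt_top.ne

lemma KKh_ne_top : KK ^ ((1:ℝ)/2) ≠ ⊤ :=
  (ENNReal.rpow_lt_top_of_nonneg (by norm_num) KK_ne_top).ne

lemma vol_closedBall {r : ℝ} (hr : 0 ≤ r) :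
    volume (Metric.closedBall (0:EE) r) = ENNReal.ofReal (r ^ 4) * KK := by
  rw [Measure.addHaar_closedBall' volume 0 hr]
  congr 2
  simp [finrank_euclideanSpace_fin]

lemma rpow_half_tsum_le (a : ℕ → ℝ≥0∞) :
    (∑' i, a i) ^ ((1:ℝ)/2) ≤ ∑' i, (a i) ^ ((1:ℝ)/2) := by
  have hs : HasSum a (∑' i, a i) := ENNReal.summable.hasSum
  have hcont : Tendsto (fun s : Finset ℕ => (∑ i ∈ s, a i) ^ ((1:ℝ)/2)) atTop
      (nhds ((∑' i, a i) ^ ((1:ℝ)/2))) :=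
    (ENNReal.continuous_rpow_const.tendsto _).comp hs
  refine le_of_tendsto hcont (Filter.Eventually.of_forall ?_)
  intro s
  refine le_trans ?_ (ENNReal.tsum_le_tsum (fun i => le_refl ((a i) ^ ((1:ℝ)/2))) |>.trans le_rfl)
  calc (∑ i ∈ s, a i) ^ ((1:ℝ)/2) ≤ ∑ i ∈ s, (a i) ^ ((1:ℝ)/2) := by
        classical
        induction s using Finset.induction_on with
        | empty => simp [ENNReal.zero_rpow_of_pos]
        | @insert _ _ h ih =>
            rw [Finset.sum_insert h, Finset.sum_insert h]
            exact (ENNReal.rpow_add_le_add_rpow _ _ (by norm_num) (by norm_num)).trans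
              (add_le_add_right ih _)
  _ ≤ ∑' i, (a i) ^ ((1:ℝ)/2) := ENNReal.sum_le_tsum s

def tj (R : ℝ) (j : ℕ) : ℝ := R ^ 2 * Real.exp 1 ^ j

def lj (R : ℝ) (j : ℕ) : ℝ := (cc R * (tj R j * ((j:ℝ) + 1)))⁻¹

lemma tj_pos (hR : R ∈ Set.Ioo (0:ℝ) 1) (j : ℕ) : 0 < tj R j := by
  have := R2_pos hR; unfold tj; positivity

lemma exists_j (hR : R ∈ Set.Ioo (0:ℝ) 1) {y : ℝ} (hy : R ^ 2 ≤ y) :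
    ∃ j : ℕ, tj R j ≤ y ∧ y < tj R (j + 1) := by
  have hR2 := R2_pos hR
  have hy0 : 0 < y := lt_of_lt_of_le hR2 hy
  set a := Real.log (y / R ^ 2) with ha_def
  have ha : 0 ≤ a := Real.log_nonneg ((one_le_div hR2).2 hy)
  refine ⟨⌊a⌋₊, ?_, ?_⟩
  · unfold tj
    rw [Real.exp_one_pow]
    have h1 : Real.exp ⌊a⌋₊ ≤ Real.exp a := Real.exp_le_exp.2 (Nat.floor_le ha)
    rw [ha_def, Real.exp_log (by positivity)] at h1
    calc R ^ 2 * Real.exp ⌊a⌋₊ ≤ R ^ 2 * (y / R ^ 2) := by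
          exact mul_le_mul_of_nonneg_left h1 hR2.le
    _ = y := by field_simp [hR.1.ne']
  · unfold tj
    rw [Real.exp_one_pow]
    push_cast
    have h2 : a < (⌊a⌋₊ : ℝ) + 1 := Nat.lt_floor_add_one a
    have h3 : y / R ^ 2 < Real.exp ((⌊a⌋₊ : ℝ) + 1) := by
      rw [← Real.exp_log (show (0:ℝ) < y / R ^ 2 by positivity)]
      exact Real.exp_lt_exp.2 h2
    calc y = R ^ 2 * (y / R ^ 2) := by field_simp [hR.1.ne']
    _ < R ^ 2 * Real.exp ((⌊a⌋₊ : ℝ) + 1) := by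
          exact mul_lt_mul_of_pos_left h3 hR2

lemma lj_pos (hR : R ∈ Set.Ioo (0:ℝ) 1) (j : ℕ) : 0 < lj R j := by
  have hc := cc_pos hR
  have ht := tj_pos hR j
  unfold lj
  have hj : (0:ℝ) < (j:ℝ) + 1 := by positivity
  positivity

lemma measure_piece (hR : R ∈ Set.Ioo (0:ℝ) 1) {l : ℝ} (hl : 0 < l) (j : ℕ) :
    volume ({x : EE | R ^ 2 < ‖x‖ ∧ ‖x‖ < R ∧ l < deriv (tauR R) ‖x‖}
        ∩ {x : EE | tj R j ≤ ‖x‖ ∧ ‖x‖ < tj R (j + 1)})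
      ≤ (Set.Ioo (0:ℝ) (lj R j)).indicator
          (fun _ => ENNReal.ofReal ((tj R (j + 1)) ^ 4) * KK) l := by
  have hc := cc_pos hR
  have htj := tj_pos hR j
  by_cases hcase : l < lj R j
  · rw [Set.indicator_of_mem (Set.mem_Ioo.mpr ⟨hl, hcase⟩), ← vol_closedBall (tj_pos hR (j+1)).le]
    apply measure_mono
    intro x hx
    rw [Metric.mem_closedBall, dist_zero_right]
    exact hx.2.2.le
  · rw [Set.indicator_of_notMem (fun h => hcase (Set.mem_Ioo.mp h).2)]
    have hempty : {x : EE | R ^ 2 < ‖x‖ ∧ ‖x‖ < R ∧ l < deriv (tauR R) ‖x‖}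
        ∩ {x : EE | tj R j ≤ ‖x‖ ∧ ‖x‖ < tj R (j + 1)} = ∅ := by
      rw [Set.eq_empty_iff_forall_notMem]
      rintro x ⟨⟨hx1, hx2, hx3⟩, hx4, hx5⟩
      set t := ‖x‖
      have htIoo : t ∈ Set.Ioo (R ^ 2) R := ⟨hx1, hx2⟩
      rw [deriv_tauR hR htIoo] at hx3
      have ht0 : 0 < t := lt_trans (R2_pos hR) hx1
      have hLj : ((j:ℝ) + 1) ≤ LL R t := by
        have harg : Real.exp 1 ^ (j + 1) ≤ Real.exp 1 * t / R ^ 2 := by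
          have heq : Real.exp 1 * tj R j / R ^ 2 = Real.exp 1 ^ (j + 1) := by
            unfold tj
            field_simp [(R2_pos hR).ne', hR.1.ne']
            ring
          rw [← heq]
          apply (div_le_div_iff_of_pos_right (R2_pos hR)).mpr
          exact mul_le_mul_of_nonneg_left hx4 (Real.exp_pos 1).le
        have := Real.log_le_log (by positivity) harg
        rw [Real.log_pow, Real.log_exp] at this
        unfold LL
        push_cast at this ⊢
        linarith
      have hmono : cc R * (tj R j * ((j:ℝ) + 1)) ≤ cc R * (t * LL R t) := by
        apply mul_le_mul_of_nonneg_left ?_ hc.le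
        apply mul_le_mul hx4 hLj (by positivity) ht0.le
      have hinv : (cc R * (t * LL R t))⁻¹ ≤ lj R j := by
        unfold lj
        exact inv_anti₀ (by positivity) hmono
      rw [not_lt] at hcase
      linarith
    rw [hempty]
    simp

end Cutoff

namespace Cutoff
variable {R : ℝ}

def wj (R : ℝ) (j : ℕ) : ℝ → ℝ≥0∞ := fun l =>
  (Set.Ioo (0:ℝ) (lj R j)).indicator
    (fun l' => ENNReal.ofReal l' *
      (ENNReal.ofReal ((tj R (j + 1)) ^ 2) * KK ^ ((1:ℝ)/2))) l

lemma wj_measurable (j : ℕ) : Measurable (wj R j) :=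
  (ENNReal.measurable_ofReal.mul_const _).indicator measurableSet_Ioo

lemma vol_S_le (hR : R ∈ Set.Ioo (0:ℝ) 1) (l : ℝ) :
    volume {x : EE | R ^ 2 < ‖x‖ ∧ ‖x‖ < R ∧ l < deriv (tauR R) ‖x‖}
      ≤ ∑' j, volume ({x : EE | R ^ 2 < ‖x‖ ∧ ‖x‖ < R ∧ l < deriv (tauR R) ‖x‖}
          ∩ {x : EE | tj R j ≤ ‖x‖ ∧ ‖x‖ < tj R (j + 1)}) := by
  refine le_trans (measure_mono ?_) (measure_iUnion_le _)
  intro x hx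
  obtain ⟨j, hj1, hj2⟩ := exists_j hR (le_of_lt hx.1)
  exact Set.mem_iUnion.2 ⟨j, hx, hj1, hj2⟩

lemma indicator_sqrt (hR : R ∈ Set.Ioo (0:ℝ) 1) (j : ℕ) (l : ℝ) :
    ENNReal.ofReal l * ((Set.Ioo (0:ℝ) (lj R j)).indicator
        (fun _ => ENNReal.ofReal ((tj R (j + 1)) ^ 4) * KK) l) ^ ((1:ℝ)/2)
      = wj R j l := by
  have htj := (tj_pos hR (j+1)).le
  by_cases hmem : l ∈ Set.Ioo (0:ℝ) (lj R j)
  · rw [Set.indicator_of_mem hmem]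
    unfold wj
    rw [Set.indicator_of_mem hmem]
    congr 1
    rw [ENNReal.mul_rpow_of_nonneg _ _ (by norm_num : (0:ℝ) ≤ 1/2),
      ENNReal.ofReal_rpow_of_nonneg (by positivity) (by norm_num)]
    congr 2
    rw [← Real.rpow_natCast (tj R (j+1)) 4, ← Real.rpow_mul htj]
    norm_num
  · rw [Set.indicator_of_notMem hmem]
    unfold wj
    rw [Set.indicator_of_notMem hmem]
    rw [ENNReal.zero_rpow_of_pos (by norm_num)]
    simp

lemma lintegrand_le (hR : R ∈ Set.Ioo (0:ℝ) 1) {l : ℝ} (hl : l ∈ Set.Ioi (0:ℝ)) :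
    ENNReal.ofReal l *
        (volume {x : EE | R ^ 2 < ‖x‖ ∧ ‖x‖ < R ∧ l < deriv (tauR R) ‖x‖}) ^ ((1:ℝ)/2)
      ≤ ∑' j, wj R j l := by
  calc ENNReal.ofReal l *
      (volume {x : EE | R ^ 2 < ‖x‖ ∧ ‖x‖ < R ∧ l < deriv (tauR R) ‖x‖}) ^ ((1:ℝ)/2)
      ≤ ENNReal.ofReal l * (∑' j, volume ({x : EE | R ^ 2 < ‖x‖ ∧ ‖x‖ < R ∧
          l < deriv (tauR R) ‖x‖} ∩ {x : EE | tj R j ≤ ‖x‖ ∧ ‖x‖ < tj R (j + 1)})) ^ ((1:ℝ)/2) :=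
        mul_le_mul_right (ENNReal.rpow_le_rpow (vol_S_le hR l) (by norm_num)) _
  _ ≤ ENNReal.ofReal l * ∑' j, (volume ({x : EE | R ^ 2 < ‖x‖ ∧ ‖x‖ < R ∧
          l < deriv (tauR R) ‖x‖} ∩ {x : EE | tj R j ≤ ‖x‖ ∧ ‖x‖ < tj R (j + 1)})) ^ ((1:ℝ)/2) :=
        mul_le_mul_right (rpow_half_tsum_le _) _
  _ ≤ ENNReal.ofReal l * ∑' j, ((Set.Ioo (0:ℝ) (lj R j)).indicator
        (fun _ => ENNReal.ofReal ((tj R (j + 1)) ^ 4) * KK) l) ^ ((1:ℝ)/2) :=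
        mul_le_mul_right (ENNReal.tsum_le_tsum (fun j =>
          ENNReal.rpow_le_rpow (measure_piece hR hl j) (by norm_num))) _
  _ = ∑' j, wj R j l := by
        rw [← ENNReal.tsum_mul_left]
        exact tsum_congr (fun j => indicator_sqrt hR j l)

lemma lintegral_ofReal_Ioo {a : ℝ} (ha : 0 ≤ a) :
    ∫⁻ l in Set.Ioo (0:ℝ) a, ENNReal.ofReal l = ENNReal.ofReal (a ^ 2 / 2) := by
  rw [← ofReal_integral_eq_lintegral_ofReal]
  · congr 1
    have h1 : ∫ x in Set.Ioo (0:ℝ) a, x = ∫ x in (0:ℝ)..a, x := by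
      rw [intervalIntegral.integral_of_le ha, integral_Ioc_eq_integral_Ioo]
    rw [h1, integral_id]
    norm_num
  · exact (continuous_id.integrableOn_Icc).mono_set Set.Ioo_subset_Icc_self
  · rw [EventuallyLE, ae_restrict_iff' measurableSet_Ioo]
    filter_upwards with x hx using hx.1.le

lemma lintegral_wj (hR : R ∈ Set.Ioo (0:ℝ) 1) (j : ℕ) :
    ∫⁻ l in Set.Ioi (0:ℝ), wj R j l
      = ENNReal.ofReal ((lj R j) ^ 2 / 2) *
          (ENNReal.ofReal ((tj R (j + 1)) ^ 2) * KK ^ ((1:ℝ)/2)) := by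
  unfold wj
  rw [lintegral_indicator measurableSet_Ioo, Measure.restrict_restrict measurableSet_Ioo,
    Set.inter_eq_self_of_subset_left Set.Ioo_subset_Ioi_self,
    lintegral_mul_const' _ _ (by
      exact ENNReal.mul_ne_top ENNReal.ofReal_ne_top KKh_ne_top),
    lintegral_ofReal_Ioo (lj_pos hR j).le]

lemma term_eq (hR : R ∈ Set.Ioo (0:ℝ) 1) (j : ℕ) :
    ENNReal.ofReal ((lj R j) ^ 2 / 2) * (ENNReal.ofReal ((tj R (j + 1)) ^ 2) * KK ^ ((1:ℝ)/2))
      = KK ^ ((1:ℝ)/2) * (ENNReal.ofReal (Real.exp 1 ^ 2 / (2 * cc R ^ 2)) *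
          ENNReal.ofReal ((((j:ℝ) + 1) ^ 2)⁻¹)) := by
  have hc := (cc_pos hR).ne'
  have hR2 := (R2_pos hR).ne'
  have hj : ((j:ℝ) + 1) ≠ 0 := by positivity
  have he := (Real.exp_pos 1).ne'
  have hreal : (lj R j) ^ 2 / 2 * (tj R (j + 1)) ^ 2
      = Real.exp 1 ^ 2 / (2 * cc R ^ 2) * (((j:ℝ) + 1) ^ 2)⁻¹ := by
    unfold lj tj
    rw [pow_succ]
    field_simp [hR.1.ne']
    ring
  calc ENNReal.ofReal ((lj R j) ^ 2 / 2) * (ENNReal.ofReal ((tj R (j + 1)) ^ 2) * KK ^ ((1:ℝ)/2))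
      = KK ^ ((1:ℝ)/2) * (ENNReal.ofReal ((lj R j) ^ 2 / 2) *
          ENNReal.ofReal ((tj R (j + 1)) ^ 2)) := by ring
  _ = KK ^ ((1:ℝ)/2) * ENNReal.ofReal ((lj R j) ^ 2 / 2 * (tj R (j + 1)) ^ 2) := by
        rw [ENNReal.ofReal_mul (by positivity)]
  _ = KK ^ ((1:ℝ)/2) * ENNReal.ofReal (Real.exp 1 ^ 2 / (2 * cc R ^ 2) * (((j:ℝ) + 1) ^ 2)⁻¹) := by
        rw [hreal]
  _ = _ := by
        rw [ENNReal.ofReal_mul (by positivity)]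

def Etot : ℝ≥0∞ := ∑' j : ℕ, ENNReal.ofReal ((((j:ℝ) + 1) ^ 2)⁻¹)

lemma Etot_ne_top : Etot ≠ ⊤ := by
  have hsum : Summable (fun j : ℕ => (((j:ℝ) + 1) ^ 2)⁻¹) := by
    have h1 : Summable (fun n : ℕ => 1 / (n:ℝ) ^ 2) := Real.summable_one_div_nat_pow.2 one_lt_two
    have h2 := (summable_nat_add_iff 1).2 h1
    apply h2.congr
    intro j
    push_cast
    rw [one_div]
  unfold Etot
  rw [← ENNReal.ofReal_tsum_of_nonneg (fun j => by positivity) hsum]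
  exact ENNReal.ofReal_ne_top

lemma partII_le (hR : R ∈ Set.Ioo (0:ℝ) 1) :
    (∫⁻ l in Set.Ioi (0:ℝ),
        ENNReal.ofReal l *
          (volume {x : EE | R ^ 2 < ‖x‖ ∧ ‖x‖ < R ∧ l < deriv (tauR R) ‖x‖}) ^ ((1:ℝ)/2))
      ≤ KK ^ ((1:ℝ)/2) * ENNReal.ofReal (Real.exp 1 ^ 2 / (2 * cc R ^ 2)) * Etot := by
  calc (∫⁻ l in Set.Ioi (0:ℝ),
        ENNReal.ofReal l *
          (volume {x : EE | R ^ 2 < ‖x‖ ∧ ‖x‖ < R ∧ l < deriv (tauR R) ‖x‖}) ^ ((1:ℝ)/2))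
      ≤ ∫⁻ l in Set.Ioi (0:ℝ), ∑' j, wj R j l :=
        setLIntegral_mono (by
          exact Measurable.ennreal_tsum (fun j => wj_measurable j))
          (fun l hl => lintegrand_le hR hl)
  _ = ∑' j, ∫⁻ l in Set.Ioi (0:ℝ), wj R j l :=
        lintegral_tsum (fun j => (wj_measurable j).aemeasurable)
  _ = ∑' j : ℕ, (KK ^ ((1:ℝ)/2) * (ENNReal.ofReal (Real.exp 1 ^ 2 / (2 * cc R ^ 2)) *
        ENNReal.ofReal ((((j:ℝ) + 1) ^ 2)⁻¹))) := by
        exact tsum_congr (fun j => by rw [lintegral_wj hR j, term_eq hR j])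
  _ = KK ^ ((1:ℝ)/2) * ENNReal.ofReal (Real.exp 1 ^ 2 / (2 * cc R ^ 2)) * Etot := by
        rw [ENNReal.tsum_mul_left]
        unfold Etot
        rw [ENNReal.tsum_mul_left, mul_assoc]

lemma partII : Filter.Tendsto (fun R : ℝ =>
      ∫⁻ l in Set.Ioi (0 : ℝ),
        ENNReal.ofReal l *
          (volume {x : EuclideanSpace ℝ (Fin 4) |
            R ^ 2 < ‖x‖ ∧ ‖x‖ < R ∧ l < deriv (tauR R) ‖x‖}) ^ ((1 : ℝ) / 2))
    (nhdsWithin 0 (Set.Ioi 0)) (nhds (0 : ℝ≥0∞)) := by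
  have hreal : Tendsto (fun R => Real.exp 1 ^ 2 / (2 * cc R ^ 2))
      (nhdsWithin (0:ℝ) (Set.Ioi 0)) (nhds 0) :=
    Tendsto.div_atTop tendsto_const_nhds
      (Tendsto.const_mul_atTop two_pos ((tendsto_pow_atTop two_ne_zero).comp cc_tendsto))
  have h1 : Tendsto (fun R => KK ^ ((1:ℝ)/2) *
      ENNReal.ofReal (Real.exp 1 ^ 2 / (2 * cc R ^ 2)) * Etot)
      (nhdsWithin (0:ℝ) (Set.Ioi 0)) (nhds 0) := by
    have h2 : Tendsto (fun R => ENNReal.ofReal (Real.exp 1 ^ 2 / (2 * cc R ^ 2)))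
        (nhdsWithin (0:ℝ) (Set.Ioi 0)) (nhds 0) := by
      have h2' := ENNReal.tendsto_ofReal hreal
      simpa using h2'
    have h3 := ENNReal.Tendsto.const_mul (a := KK ^ ((1:ℝ)/2)) h2 (Or.inr KKh_ne_top)
    rw [mul_zero] at h3
    have h4 := ENNReal.Tendsto.mul_const (b := Etot) h3 (Or.inr Etot_ne_top)
    rwa [zero_mul] at h4
  apply tendsto_of_tendsto_of_tendsto_of_le_of_le' tendsto_const_nhds h1
  · exact Filter.Eventually.of_forall (fun R => zero_le)
  · filter_upwards [Ioo_mem_nhdsGT_of_mem ⟨le_refl (0:ℝ), zero_lt_one⟩] with R hR using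
      partII_le hR

end Cutoff
end

theorem cutoff_properties :
    (∀ R ∈ Set.Ioo (0 : ℝ) 1,
      ContinuousOn (tauR R) (Set.Ici 0) ∧ MonotoneOn (tauR R) (Set.Ici 0) ∧
        ∀ t ∈ Set.Ici (0 : ℝ), 0 ≤ tauR R t ∧ tauR R t ≤ 1) ∧
    Filter.Tendsto (fun R : ℝ =>
        ∫ t in Set.Ioo (R ^ 2) R,
          (|deriv (deriv (tauR R)) t| ^ 2 + |deriv (tauR R) t / t| ^ 2) * t ^ 3)
      (nhdsWithin 0 (Set.Ioi 0)) (nhds 0) ∧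
    Filter.Tendsto (fun R : ℝ =>
        ∫⁻ l in Set.Ioi (0 : ℝ),
          ENNReal.ofReal l *
            (volume {x : EuclideanSpace ℝ (Fin 4) |
              R ^ 2 < ‖x‖ ∧ ‖x‖ < R ∧ l < deriv (tauR R) ‖x‖}) ^ ((1 : ℝ) / 2))
      (nhdsWithin 0 (Set.Ioi 0)) (nhds (0 : ℝ≥0∞)) := 
  ⟨Cutoff.part1, Cutoff.partI, Cutoff.partII⟩
end
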